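/- Let α ∈ (0,1) and β ∈ (2/(1+α), β*(α)], where β*(α) = (2/(1−α))·arctanh(t*)/t* and t* ∈ (0,1) is the unique solution of (1−t²)·arctanh(t)/t = (1−α)/(1+α). Then the set of global maximizers of G_{α,β} on [−1,1]² is exactly {(m_g,m_g), (−m_g,−m_g)}, where m_g is the unique positive solution of m = tanh((β/2)(1+α)m), and both points are local maxima of G_{α,β} (the Hessian of G_{α,β} there is negative definite). -/

import Mathlib

open Filter

noncomputable section

/-- `E_α(m)`. -/
def Ebil (a : ℝ) (m : ℝ × ℝ) : ℝ := (m.1 ^ 2 + m.2 ^ 2) / 4 + (a / 2) * m.1 * m.2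

/-- One-dimensional entropy term. -/
def entI (x : ℝ) : ℝ :=
  ((1 + x) / 2) * Real.log ((1 + x) / 2) + ((1 - x) / 2) * Real.log ((1 - x) / 2)

/-- Free energy functional `G_{α,β}`. -/
def Gfun (a β : ℝ) (m : ℝ × ℝ) : ℝ := β * Ebil a m - (entI m.1 + entI m.2)

/-- Inverse hyperbolic tangent. -/
def arctanh (x : ℝ) : ℝ := (1 / 2) * Real.log ((1 + x) / (1 - x))

/-- The Hessian matrix of `G_{α,β}` at `m`. -/
def hessG (a β : ℝ) (m : ℝ × ℝ) : Matrix (Fin 2) (Fin 2) ℝ :=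
  !![β / 2 - 1 / (1 - m.1 ^ 2), β * a / 2; β * a / 2, β / 2 - 1 / (1 - m.2 ^ 2)]

/-- The square `[−1,1]²`. -/
def box : Set (ℝ × ℝ) := Set.Icc (-1 : ℝ) 1 ×ˢ Set.Icc (-1 : ℝ) 1

/-! ### Auxiliary lemmas -/

lemma arctanh_zero : arctanh 0 = 0 := by simp [arctanh]

lemma hasDerivAt_arctanh {x : ℝ} (h1 : -1 < x) (h2 : x < 1) :
    HasDerivAt arctanh (1 / (1 - x ^ 2)) x := by
  have hp : (0:ℝ) < 1 + x := by linarith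
  have hm : (0:ℝ) < 1 - x := by linarith
  have hL1 : HasDerivAt (fun y : ℝ => Real.log (1 + y)) (1 + x)⁻¹ x := by
    simpa [Function.comp_def] using (Real.hasDerivAt_log hp.ne').comp x ((hasDerivAt_id x).const_add 1)
  have hL2 : HasDerivAt (fun y : ℝ => Real.log (1 - y)) (-(1 - x)⁻¹) x := by
    simpa [Function.comp_def] using (Real.hasDerivAt_log hm.ne').comp x ((hasDerivAt_id x).neg.const_add 1)
  have hg : HasDerivAt (fun y : ℝ => (1/2) * (Real.log (1 + y) - Real.log (1 - y)))
      ((1/2) * ((1 + x)⁻¹ - -(1 - x)⁻¹)) x := ((hL1.sub hL2).const_mul (1/2))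
  have heq : arctanh =ᶠ[nhds x] fun y : ℝ => (1/2) * (Real.log (1 + y) - Real.log (1 - y)) := by
    filter_upwards [Ioo_mem_nhds h1 h2] with y hy
    have hyp : (0:ℝ) < 1 + y := by linarith [hy.1]
    have hym : (0:ℝ) < 1 - y := by linarith [hy.2]
    rw [arctanh, Real.log_div hyp.ne' hym.ne']
  have h := hg.congr_of_eventuallyEq heq
  refine h.congr_deriv ?_
  have : 1 - x ^ 2 = (1 + x) * (1 - x) := by ring
  rw [this]
  field_simp
  ring

lemma hasDerivAt_entI {x : ℝ} (h1 : -1 < x) (h2 : x < 1) :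
    HasDerivAt entI (arctanh x) x := by
  have hp : (0:ℝ) < (1 + x) / 2 := by linarith
  have hm : (0:ℝ) < (1 - x) / 2 := by linarith
  have hu : HasDerivAt (fun y : ℝ => (1 + y) / 2) (1/2) x := by
    simpa using (((hasDerivAt_id x).const_add 1).div_const 2)
  have hv : HasDerivAt (fun y : ℝ => (1 - y) / 2) (-1/2) x := by
    simpa using (((hasDerivAt_id x).const_sub 1).div_const 2)
  have h1' : HasDerivAt (fun y : ℝ => ((1 + y)/2) * Real.log ((1 + y)/2))
      ((Real.log ((1 + x)/2) + 1) * (1/2)) x :=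
    by have := (Real.hasDerivAt_mul_log hp.ne').comp x hu; exact this
  have h2' : HasDerivAt (fun y : ℝ => ((1 - y)/2) * Real.log ((1 - y)/2))
      ((Real.log ((1 - x)/2) + 1) * (-1/2)) x :=
    by have := (Real.hasDerivAt_mul_log hm.ne').comp x hv; exact this
  have h := h1'.add h2'
  have hval : (Real.log ((1 + x)/2) + 1) * (1/2) + (Real.log ((1 - x)/2) + 1) * (-1/2)
      = arctanh x := by
    rw [arctanh, show (1 + x) / (1 - x) = ((1+x)/2) / ((1-x)/2) by field_simp,
      Real.log_div hp.ne' hm.ne']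
    ring
  rw [hval] at h
  exact h

lemma continuous_entI : Continuous entI := by
  unfold entI
  exact ((Real.continuous_mul_log).comp (by continuity)).add
    ((Real.continuous_mul_log).comp (by continuity))

lemma entI_neg (x : ℝ) : entI (-x) = entI x := by
  unfold entI
  have e1 : (1 + -x) = 1 - x := by ring
  have e2 : (1 - -x) = 1 + x := by ring
  rw [e1, e2, add_comm]

lemma tanh_eq' (y : ℝ) :
    Real.tanh y = (Real.exp y - Real.exp (-y)) / (Real.exp y + Real.exp (-y)) := by
  rw [Real.tanh_eq_sinh_div_cosh, Real.sinh_eq, Real.cosh_eq]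
  have h : (0:ℝ) < Real.exp y + Real.exp (-y) := by positivity
  field_simp

lemma tanh_lt_one' (y : ℝ) : Real.tanh y < 1 := by
  rw [tanh_eq']
  have h : (0:ℝ) < Real.exp y + Real.exp (-y) := by positivity
  rw [div_lt_one h]
  have := Real.exp_pos (-y)
  linarith

lemma arctanh_tanh' (y : ℝ) : arctanh (Real.tanh y) = y := by
  have h : (0:ℝ) < Real.exp y + Real.exp (-y) := by positivity
  have he : (0:ℝ) < Real.exp (-y) := Real.exp_pos _
  have hey : (0:ℝ) < Real.exp y := Real.exp_pos _
  rw [arctanh, tanh_eq']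
  have h1 : 1 + (Real.exp y - Real.exp (-y)) / (Real.exp y + Real.exp (-y))
      = 2 * Real.exp y / (Real.exp y + Real.exp (-y)) := by field_simp; ring
  have h2 : 1 - (Real.exp y - Real.exp (-y)) / (Real.exp y + Real.exp (-y))
      = 2 * Real.exp (-y) / (Real.exp y + Real.exp (-y)) := by field_simp; ring
  rw [h1, h2, show 2 * Real.exp y / (Real.exp y + Real.exp (-y)) /
      (2 * Real.exp (-y) / (Real.exp y + Real.exp (-y))) = Real.exp y / Real.exp (-y) by
      field_simp, ← Real.exp_sub, Real.log_exp]
  ring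

lemma posdef_two (a c : ℝ) (h : |c| < a) :
    (!![a, c; c, a] : Matrix (Fin 2) (Fin 2) ℝ).PosDef := by
  obtain ⟨h1, h2⟩ := abs_lt.mp h
  have ha : 0 < a := lt_of_le_of_lt (abs_nonneg c) h
  refine Matrix.PosDef.of_dotProduct_mulVec_pos ?_ ?_
  · ext i j
    fin_cases i <;> fin_cases j <;>
      simp [Matrix.conjTranspose_apply]
  · intro x hx
    have hsum : dotProduct (star x) ((!![a, c; c, a] : Matrix (Fin 2) (Fin 2) ℝ).mulVec x)
        = x 0 * (a * x 0 + c * x 1) + x 1 * (c * x 0 + a * x 1) := by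
      simp [dotProduct, Matrix.mulVec, Fin.sum_univ_two, Matrix.cons_val_zero,
        Matrix.cons_val_one, Matrix.head_cons]
    rw [hsum]
    by_cases hx1 : x 1 = 0
    · have hx0 : x 0 ≠ 0 := by
        intro hx0
        apply hx
        funext i
        fin_cases i <;> simp [hx0, hx1]
      have : 0 < x 0 ^ 2 := by positivity
      rw [hx1]
      nlinarith
    · have hx1sq : 0 < x 1 ^ 2 := by positivity
      nlinarith [sq_nonneg (a * x 0 + c * x 1), mul_pos (mul_pos (by linarith : (0:ℝ) < a - c)
        (by linarith : (0:ℝ) < a + c)) hx1sq]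

/-- The one–dimensional effective free energy. -/
def ffun (b x : ℝ) : ℝ := b / 2 * x ^ 2 - entI x

lemma ffun_hasDeriv (b : ℝ) {x : ℝ} (h1 : -1 < x) (h2 : x < 1) :
    HasDerivAt (ffun b) (b * x - arctanh x) x := by
  have h := ((hasDerivAt_pow 2 x).const_mul (b/2)).sub (hasDerivAt_entI h1 h2)
  refine h.congr_deriv ?_
  ring

lemma ffun_cont (b : ℝ) : Continuous (ffun b) := by
  unfold ffun
  exact (continuous_const.mul (continuous_pow 2)).sub continuous_entI

lemma ffun_neg (b x : ℝ) : ffun b (-x) = ffun b x := by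
  unfold ffun; rw [entI_neg]; ring_nf

lemma ffun_max (b mg : ℝ) (hmg : 0 < mg) (hmg1 : mg < 1)
    (klow : ∀ x : ℝ, 0 < x → x < mg → arctanh x < b * x)
    (khigh : ∀ x : ℝ, mg < x → x < 1 → b * x < arctanh x) :
    ∀ x ∈ Set.Icc (-1:ℝ) 1,
      ffun b x ≤ ffun b mg ∧ (ffun b x = ffun b mg → x = mg ∨ x = -mg) := by
  have mono : StrictMonoOn (ffun b) (Set.Icc 0 mg) := by
    apply strictMonoOn_of_deriv_pos (convex_Icc _ _) (ffun_cont b).continuousOn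
    intro x hx
    rw [interior_Icc] at hx
    rw [(ffun_hasDeriv b (by linarith [hx.1] : (-1:ℝ) < x) (by linarith [hx.2])).deriv]
    have := klow x hx.1 hx.2
    linarith
  have anti : StrictAntiOn (ffun b) (Set.Icc mg 1) := by
    apply strictAntiOn_of_deriv_neg (convex_Icc _ _) (ffun_cont b).continuousOn
    intro x hx
    rw [interior_Icc] at hx
    rw [(ffun_hasDeriv b (by linarith [hx.1] : (-1:ℝ) < x) hx.2).deriv]
    have := khigh x hx.1 hx.2
    linarith
  have hstep : ∀ x ∈ Set.Icc (0:ℝ) 1, x ≠ mg → ffun b x < ffun b mg := by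
    intro x hx hne
    rcases lt_or_gt_of_ne hne with h | h
    · exact mono ⟨hx.1, h.le⟩ ⟨hmg.le, le_refl mg⟩ h
    · exact anti ⟨le_refl mg, hmg1.le⟩ ⟨h.le, hx.2⟩ h
  intro x hx
  have habs : ffun b |x| = ffun b x := by
    rcases abs_cases x with h | h
    · rw [h.1]
    · rw [h.1, ffun_neg]
  have hmem : |x| ∈ Set.Icc (0:ℝ) 1 := ⟨abs_nonneg x, abs_le.2 ⟨hx.1, hx.2⟩⟩
  constructor
  · by_cases he : |x| = mg
    · rw [← habs, he]
    · have := hstep |x| hmem he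
      rw [habs] at this
      exact this.le
  · intro heq
    have he : |x| = mg := by
      by_contra he
      have := hstep |x| hmem he
      rw [habs, heq] at this
      exact lt_irrefl _ this
    exact (abs_eq hmg.le).mp he

lemma Gfun_eq (a β : ℝ) (m : ℝ × ℝ) :
    Gfun a β m = ffun (β * (1 + a) / 2) m.1 + ffun (β * (1 + a) / 2) m.2
      - β * a / 4 * (m.1 - m.2) ^ 2 := by
  simp only [Gfun, ffun, Ebil]
  ring

/-- for `α ∈ (0,1)` and `β ∈ (2/(1+α), β*(α)]`, the set of global maximizers
of `G_{α,β}` on `[−1,1]²` is exactly `{(m_g,m_g), (−m_g,−m_g)}`, and at both points the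
Hessian of `G_{α,β}` is negative definite. -/
theorem G_two_symmetric_maximizers
    (α β tstar mg : ℝ) (hα : α ∈ Set.Ioo (0 : ℝ) 1)
    (ht : tstar ∈ Set.Ioo (0 : ℝ) 1)
    (hteq : (1 - tstar ^ 2) * arctanh tstar / tstar = (1 - α) / (1 + α))
    (hβ : β ∈ Set.Ioc (2 / (1 + α)) ((2 / (1 - α)) * (arctanh tstar / tstar)))
    (hmg : 0 < mg) (hmgeq : mg = Real.tanh ((β / 2) * (1 + α) * mg)) :
    {m | m ∈ box ∧ ∀ m' ∈ box, Gfun α β m' ≤ Gfun α β m} =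
        {((mg, mg) : ℝ × ℝ), (-mg, -mg)} ∧
      (-(hessG α β (mg, mg))).PosDef ∧ (-(hessG α β (-mg, -mg))).PosDef := by
  obtain ⟨hα0, hα1⟩ := hα
  have h1α : (0:ℝ) < 1 + α := by linarith
  have hβlow := hβ.1
  have hβpos : (0:ℝ) < β := lt_trans (by positivity) hβlow
  set b := β * (1 + α) / 2 with hbdef
  have hb1 : 1 < b := by
    rw [div_lt_iff₀ h1α] at hβlow
    rw [hbdef, lt_div_iff₀ (by norm_num : (0:ℝ) < 2)]
    linarith
  have hbpos : (0:ℝ) < b := by linarith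
  have hmg1 : mg < 1 := by rw [hmgeq]; exact tanh_lt_one' _
  have hmgm1 : (-1:ℝ) < mg := by linarith
  have hmgsq : (0:ℝ) < 1 - mg ^ 2 := by nlinarith
  have harc : arctanh mg = b * mg := by
    conv_lhs => rw [hmgeq]
    rw [arctanh_tanh', hbdef]
    ring
  have hconv : StrictConvexOn ℝ (Set.Ico (0:ℝ) 1) arctanh := by
    apply StrictMonoOn.strictConvexOn_of_deriv (convex_Ico 0 1)
    · intro x hx
      exact (hasDerivAt_arctanh (by linarith [hx.1]) hx.2).continuousAt.continuousWithinAt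
    · rw [interior_Ico]
      intro x hx y hy hxy
      rw [(hasDerivAt_arctanh (by linarith [hx.1] : (-1:ℝ) < x) hx.2).deriv,
        (hasDerivAt_arctanh (by linarith [hy.1] : (-1:ℝ) < y) hy.2).deriv]
      have hy2 : (0:ℝ) < 1 - y ^ 2 := by nlinarith [hy.1, hy.2]
      have hxy2 : 1 - y ^ 2 < 1 - x ^ 2 := by nlinarith [hx.1, hy.1]
      exact one_div_lt_one_div_of_lt hy2 hxy2
  have klow : ∀ x : ℝ, 0 < x → x < mg → arctanh x < b * x := by
    intro x hx0 hxmg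
    have hxm : x / mg < 1 := (div_lt_one hmg).2 hxmg
    have hxm0 : 0 < x / mg := by positivity
    have h := hconv.2 (show (0:ℝ) ∈ Set.Ico (0:ℝ) 1 from ⟨le_refl 0, one_pos⟩)
      (show mg ∈ Set.Ico (0:ℝ) 1 from ⟨hmg.le, hmg1⟩) hmg.ne
      (by linarith : (0:ℝ) < 1 - x / mg) hxm0 (by ring)
    simp only [smul_eq_mul, mul_zero, zero_add, arctanh_zero] at h
    rw [div_mul_cancel₀ x hmg.ne', harc] at h
    have hxx : x / mg * (b * mg) = b * x := by field_simp
    linarith [h]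
  have khigh : ∀ x : ℝ, mg < x → x < 1 → b * x < arctanh x := by
    intro x hmgx hx1
    have hx0 : 0 < x := lt_trans hmg hmgx
    have hxm : mg / x < 1 := (div_lt_one hx0).2 hmgx
    have hxm0 : 0 < mg / x := by positivity
    have h := hconv.2 (show (0:ℝ) ∈ Set.Ico (0:ℝ) 1 from ⟨le_refl 0, one_pos⟩)
      (show x ∈ Set.Ico (0:ℝ) 1 from ⟨hx0.le, hx1⟩) hx0.ne
      (by linarith : (0:ℝ) < 1 - mg / x) hxm0 (by ring)
    simp only [smul_eq_mul, mul_zero, zero_add, arctanh_zero] at h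
    rw [div_mul_cancel₀ mg hx0.ne', harc] at h
    have h2 : b < arctanh x / x := by
      have hh : mg * b < mg * (arctanh x / x) := by
        rw [show mg * (arctanh x / x) = mg / x * arctanh x by ring]
        linarith [h]
      exact (mul_lt_mul_iff_right₀ hmg).1 hh
    have := mul_lt_mul_of_pos_right h2 hx0
    rwa [div_mul_cancel₀ _ hx0.ne'] at this
  have hkey : b < 1 / (1 - mg ^ 2) := by
    obtain ⟨c, hc, hceq⟩ := exists_hasDerivAt_eq_slope arctanh (fun t => 1 / (1 - t ^ 2)) hmg
      (fun t ht => (hasDerivAt_arctanh (by linarith [ht.1])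
        (by linarith [ht.2])).continuousAt.continuousWithinAt)
      (fun t ht => hasDerivAt_arctanh (by linarith [ht.1]) (by linarith [ht.2]))
    simp only [arctanh_zero, sub_zero] at hceq
    rw [harc, mul_div_assoc, div_self hmg.ne', mul_one] at hceq
    have hc2 : (0:ℝ) < 1 - c ^ 2 := by nlinarith [hc.1, hc.2]
    have hlt : 1 - mg ^ 2 < 1 - c ^ 2 := by nlinarith [hc.1, hc.2]
    have := one_div_lt_one_div_of_lt hmgsq hlt
    rw [hceq] at this
    linarith
  have fmax := ffun_max b mg hmg hmg1 klow khigh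
  have hG2 : ∀ x y : ℝ, Gfun α β (x, y) = ffun b x + ffun b y - β * α / 4 * (x - y) ^ 2 := by
    intro x y
    rw [hbdef]
    exact Gfun_eq α β (x, y)
  have hmem1 : mg ∈ Set.Icc (-1:ℝ) 1 := Set.mem_Icc.2 ⟨hmgm1.le, hmg1.le⟩
  have hmem1' : -mg ∈ Set.Icc (-1:ℝ) 1 := Set.mem_Icc.2 ⟨by linarith, by linarith⟩
  have hmmbox : ((mg, mg) : ℝ × ℝ) ∈ box := by
    simp only [box, Set.mem_prod]
    exact ⟨hmem1, hmem1⟩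
  have hnnbox : ((-mg, -mg) : ℝ × ℝ) ∈ box := by
    simp only [box, Set.mem_prod]
    exact ⟨hmem1', hmem1'⟩
  have hGmm : Gfun α β (mg, mg) = 2 * ffun b mg := by rw [hG2]; ring
  have hGnn : Gfun α β (-mg, -mg) = 2 * ffun b mg := by rw [hG2, ffun_neg]; ring
  have hq : ∀ m : ℝ × ℝ, 0 ≤ β * α / 4 * (m.1 - m.2) ^ 2 := by
    intro m; positivity
  have upper : ∀ m' ∈ box, Gfun α β m' ≤ 2 * ffun b mg := by
    intro m' hm'
    simp only [box, Set.mem_prod] at hm'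
    have f1 := (fmax m'.1 hm'.1).1
    have f2 := (fmax m'.2 hm'.2).1
    have hqm := hq m'
    have := hG2 m'.1 m'.2
    rw [Prod.mk.eta] at this
    rw [this]
    linarith
  refine ⟨Set.ext fun m => ?_, ?_, ?_⟩
  · simp only [Set.mem_setOf_eq, Set.mem_insert_iff, Set.mem_singleton_iff]
    constructor
    · rintro ⟨hmb, hmax⟩
      have hle : 2 * ffun b mg ≤ Gfun α β m := by
        rw [← hGmm]; exact hmax (mg, mg) hmmbox
      have hGm : Gfun α β m = ffun b m.1 + ffun b m.2 - β * α / 4 * (m.1 - m.2) ^ 2 := by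
        have := hG2 m.1 m.2
        rwa [Prod.mk.eta] at this
      rw [hGm] at hle
      simp only [box, Set.mem_prod] at hmb
      have f1 := (fmax m.1 hmb.1).1
      have f2 := (fmax m.2 hmb.2).1
      have hqm := hq m
      have hqz : β * α / 4 * (m.1 - m.2) ^ 2 = 0 := le_antisymm (by linarith) hqm
      have h12 : m.1 = m.2 := by
        have hβα : (0:ℝ) < β * α / 4 := by positivity
        rcases mul_eq_zero.1 hqz with h | h
        · exact absurd h hβα.ne'
        · have := pow_eq_zero_iff (two_ne_zero) |>.1 h
          linarith [sub_eq_zero.1 this]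
      have hfeq : ffun b m.1 = ffun b mg := by
        rw [← h12] at f2 hle
        linarith
      rcases (fmax m.1 hmb.1).2 hfeq with h | h
      · left
        exact Prod.ext_iff.2 ⟨h, by rw [← h12]; exact h⟩
      · right
        exact Prod.ext_iff.2 ⟨h, by rw [← h12]; exact h⟩
    · rintro (rfl | rfl)
      · exact ⟨hmmbox, fun m' hm' => by rw [hGmm]; exact upper m' hm'⟩
      · exact ⟨hnnbox, fun m' hm' => by rw [hGnn]; exact upper m' hm'⟩
  · have hgap : |(-(β * α / 2))| < 1 / (1 - mg ^ 2) - β / 2 := by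
      rw [abs_neg, abs_of_pos (by positivity : (0:ℝ) < β * α / 2)]
      rw [hbdef] at hkey
      linarith
    have hmat : -(hessG α β (mg, mg)) =
        !![1 / (1 - mg ^ 2) - β / 2, -(β * α / 2); -(β * α / 2), 1 / (1 - mg ^ 2) - β / 2] := by
      ext i j
      fin_cases i <;> fin_cases j <;> simp [hessG] <;> ring
    rw [hmat]
    exact posdef_two _ _ hgap
  · have hgap : |(-(β * α / 2))| < 1 / (1 - mg ^ 2) - β / 2 := by
      rw [abs_neg, abs_of_pos (by positivity : (0:ℝ) < β * α / 2)]
      rw [hbdef] at hkey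
      linarith
    have hmat : -(hessG α β (-mg, -mg)) =
        !![1 / (1 - mg ^ 2) - β / 2, -(β * α / 2); -(β * α / 2), 1 / (1 - mg ^ 2) - β / 2] := by
      ext i j
      fin_cases i <;> fin_cases j <;> simp [hessG, neg_neg] <;> ring_nf
    rw [hmat]
    exact posdef_two _ _ hgap

end
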